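/- arXiv:1603.03351 — 3 statements merged into one kernel-verified Lean document; each statement's English description precedes it below -/
import Mathlib

section
/- Let R be a preordered ring. R is auto-archimedean if and only if for every n ∈ ℕ and every w = (w₀, w₁, ..., wₙ) ∈ R^(1+n), whenever the map Φ_w : Rⁿ → R, Φ_w(x) = w₀ + ∑ᵢ xᵢwᵢ, maps R₊ⁿ into R₊, one has wᵢ ∈ R₊ for all i = 0,...,n. -/
/-- a preordered ring `R` is auto-archimedean iff for every `n` and every
`w ∈ R^(1+n)`, if `Φ_w : x ↦ w₀ + ∑ i, x i * w i` maps `R₊ⁿ` into `R₊` then all `w i ∈ R₊`. -/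
theorem stmt5 (R : Type*) [Ring R] (S : Subsemiring R) :
    (∀ r : R, (∃ b : R, ∀ s ∈ S, b - s * r ∈ S) → -r ∈ S) ↔
      (∀ (n : ℕ) (w : Fin (n + 1) → R),
        (∀ x : Fin n → R, (∀ i, x i ∈ S) → w 0 + ∑ i, x i * w i.succ ∈ S) →
        ∀ i, w i ∈ S) := by
  constructor
  · intro h n w hw
    have h0 : w 0 ∈ S := by simpa using hw 0 (fun i => S.zero_mem)
    intro i
    refine Fin.cases h0 (fun j => ?_) i
    have key : -(-(w j.succ)) ∈ S := by
      refine h _ ⟨w 0, fun s hs => ?_⟩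
      have := hw (fun k => if k = j then s else 0)
        (fun k => by show (if k = j then s else 0) ∈ S; split <;> [exact hs; exact S.zero_mem])
      simp only [ite_mul, zero_mul, Finset.sum_ite_eq', Finset.mem_univ, if_true] at this
      simpa [mul_neg, sub_neg_eq_add] using this
    simpa using key
  · rintro h r ⟨b, hb⟩
    have := h 1 ![b, -r] (fun x hx => by
      simpa [Fin.sum_univ_one, mul_neg, ← sub_eq_add_neg] using hb (x 0) (hx 0)) 1
    simpa using this
end

section
/- Let d > 1 be an integer and R a preordered ring in which d is invertible with inverse in R₊, and in which 1 is an order unit for R₊ (for every x ∈ R₊ there exists n ∈ ℕ with x ≤ n). Then every left R₊-affine map φ : R₊ → R₊ satisfies φ(x) = φ(0) + x·(φ(1) − φ(0)) for all x ∈ R₊, assuming the image of ℤ[1/d] is central in R. -/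
/-- let `d > 1`, let `R` be a preordered ring in which `d` is invertible
with central inverse in `R₊`, and in which `1` is an order unit for `R₊`.  Then every
left `R₊`-affine map `φ : R₊ → R₊` satisfies `φ x = φ 0 + x * (φ 1 - φ 0)` on `R₊`. -/
theorem stmt10 (R : Type*) [Ring R] (S : Subsemiring R) (d : ℕ) (hd : 1 < d)
    (u : R) (hu : u ∈ S) (hdu : (d : R) * u = 1) (hud : u * (d : R) = 1)
    (hcentral : ∀ a : R, a * u = u * a)
    (hunit : ∀ x ∈ S, ∃ n : ℕ, (n : R) - x ∈ S)
    (φ : R → R) (hmaps : ∀ x ∈ S, φ x ∈ S)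
    (haff : ∀ (m : ℕ) (w y : Fin m → R), (∀ j, w j ∈ S) → (∑ j, w j) = 1 →
      (∀ j, y j ∈ S) → φ (∑ j, w j * y j) = ∑ j, w j * φ (y j)) :
    ∀ x ∈ S, φ x = φ 0 + x * (φ 1 - φ 0) := by
  intro x hx
  obtain ⟨n, hn⟩ := hunit x hx
  set k := n with hk
  have hnk : n ≤ d ^ k := (Nat.lt_pow_self (n := n) hd).le
  have hdk1 : 1 ≤ d ^ k := Nat.one_le_pow _ _ (by omega)
  -- commutation facts
  have hck : ∀ a : R, a * u ^ k = u ^ k * a := by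
    intro a
    have h : Commute a u := hcentral a
    exact h.pow_right k
  have hcud : Commute u (d : R) := hud.trans hdu.symm
  have hudk : u ^ k * (d : R) ^ k = 1 := by
    rw [← hcud.mul_pow, hud, one_pow]
  have hDS : ((d : R) ^ k) ∈ S := pow_mem (natCast_mem S d) k
  have hukS : u ^ k ∈ S := pow_mem hu k
  -- key lemma
  have key : ∀ z ∈ S, ((d : R) ^ k - z) ∈ S →
      φ z = φ 0 + z * u ^ k * (φ ((d : R) ^ k) - φ 0) := by
    intro z hz hdz
    have h := haff 2 ![u ^ k * z, u ^ k * ((d : R) ^ k - z)] ![(d : R) ^ k, 0]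
      (by
        intro j
        fin_cases j
        · exact mul_mem hukS hz
        · exact mul_mem hukS hdz)
      (by
        simp only [Fin.sum_univ_two, Matrix.cons_val_zero, Matrix.cons_val_one, Matrix.head_cons, ← mul_add]
        rw [add_sub_cancel]
        exact hudk)
      (by
        intro j
        fin_cases j
        · exact hDS
        · exact zero_mem S)
    simp only [Fin.sum_univ_two, Matrix.cons_val_zero, Matrix.cons_val_one,
      Matrix.head_cons, mul_zero, add_zero] at h
    have hz' : u ^ k * z * (d : R) ^ k = z := by
      rw [← hck z, mul_assoc, hudk, mul_one]
    rw [hz'] at h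
    rw [h, mul_sub, hudk, ← hck z]
    noncomm_ring
  have hdkx : ((d : R) ^ k - x) ∈ S := by
    have h1 : ((d ^ k - n : ℕ) : R) ∈ S := natCast_mem S _
    have : (d : R) ^ k - x = ((d ^ k - n : ℕ) : R) + ((n : R) - x) := by
      rw [Nat.cast_sub hnk]
      push_cast
      abel
    rw [this]
    exact add_mem h1 hn
  have hdk1' : ((d : R) ^ k - 1) ∈ S := by
    have : (d : R) ^ k - 1 = ((d ^ k - 1 : ℕ) : R) := by
      rw [Nat.cast_sub hdk1]
      push_cast
      abel
    rw [this]
    exact natCast_mem S _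
  have h1 := key 1 (one_mem S) hdk1'
  have hx' := key x hx hdkx
  rw [one_mul] at h1
  have : u ^ k * (φ ((d : R) ^ k) - φ 0) = φ 1 - φ 0 := by
    rw [h1]; abel
  rw [hx', mul_assoc, this]
end

section
/- Let d > 1 be an integer and R a preordered ring in which d is invertible with inverse in R₊, in which 1 is an order unit for R₊. Then R has the affine extension property: every left R₊-affine map φ : R₊ⁿ → R₊ satisfies φ(x) = φ(0) + ∑ᵢ xᵢ(φ(bᵢ) − φ(0)) in R for all x ∈ R₊ⁿ, where bᵢ is the i-th standard basis vector. -/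
/-- let `d > 1`, let `R` be a preordered ring in which `d` is invertible
with central inverse in `R₊`, and in which `1` is an order unit for `R₊`.  Then `R` has
the affine extension property: every left `R₊`-affine map `φ : R₊ⁿ → R₊` satisfies
`φ x = φ 0 + ∑ i, x i * (φ bᵢ - φ 0)` in `R` for all `x ∈ R₊ⁿ`. -/
theorem stmt11 (R : Type*) [Ring R] (S : Subsemiring R) (d : ℕ) (hd : 1 < d)
    (u : R) (hu : u ∈ S) (hdu : (d : R) * u = 1) (hud : u * (d : R) = 1)
    (hcentral : ∀ a : R, a * u = u * a)
    (hunit : ∀ x ∈ S, ∃ m : ℕ, (m : R) - x ∈ S)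
    (n : ℕ) (φ : (Fin n → R) → R)
    (hmaps : ∀ x : Fin n → R, (∀ i, x i ∈ S) → φ x ∈ S)
    (haff : ∀ (m : ℕ) (w : Fin m → R) (y : Fin m → Fin n → R),
      (∀ j, w j ∈ S) → (∑ j, w j) = 1 → (∀ j i, y j i ∈ S) →
      φ (fun i => ∑ j, w j * y j i) = ∑ j, w j * φ (y j)) :
    ∀ x : Fin n → R, (∀ i, x i ∈ S) →
      φ x = φ 0 + ∑ i, x i * (φ (fun j => if j = i then 1 else 0) - φ 0) := by
  intro x hx
  classical
  -- bounds for each coordinate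
  choose m hm using fun i => hunit (x i) (hx i)
  set M : ℕ := ∑ i, m i with hM
  obtain ⟨k, hk⟩ : ∃ k, M ≤ d ^ k := ⟨M, (Nat.lt_pow_self hd : M < d ^ M).le⟩
  set c : R := (d : R) with hc
  -- basic commutation facts
  have hcu : ∀ a : R, Commute u a := fun a => (hcentral a).symm
  have hcc : ∀ a : R, Commute c a := fun a => Nat.cast_commute d a
  -- d^k * u^k = 1
  have hone : c ^ k * u ^ k = 1 := by
    have h := (hcc u).mul_pow k
    rw [← h, hc, hdu, one_pow]
  have hukS : u ^ k ∈ S := pow_mem hu k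
  -- 1 - u^k ∈ S
  have hcast : ((d ^ k - 1 : ℕ) : R) = c ^ k - 1 := by
    rw [Nat.cast_sub (Nat.one_le_pow _ _ (by omega)), Nat.cast_pow, Nat.cast_one, hc]
  have h1uk : (1 : R) - u ^ k ∈ S := by
    have hmem : ((d ^ k - 1 : ℕ) : R) * u ^ k ∈ S := S.mul_mem (natCast_mem S _) hukS
    rwa [hcast, sub_mul, hone, one_mul] at hmem
  -- first affine application: scaling by u^k
  have E1 : φ (fun i => u ^ k * x i) = u ^ k * φ x + (1 - u ^ k) * φ 0 := by
    have h := haff 2 ![u ^ k, 1 - u ^ k] ![x, 0]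
      (fun j => by
        fin_cases j
        · simpa using hukS
        · simpa using h1uk)
      (by simp [Fin.sum_univ_two])
      (fun j i => by
        fin_cases j
        · simpa using hx i
        · simpa using S.zero_mem)
    simpa [Fin.sum_univ_two] using h
  -- the slack weight
  set wl : R := 1 - ∑ i, x i * u ^ k with hwl
  have hwlS : wl ∈ S := by
    have hfact : wl = (((d ^ k - M : ℕ) : R) + ∑ i, ((m i : R) - x i)) * u ^ k := by
      have h1 : ((d ^ k - M : ℕ) : R) = c ^ k - (M : R) := by
        rw [Nat.cast_sub hk, Nat.cast_pow, hc]
      have h2 : (M : R) = ∑ i, (m i : R) := by rw [hM]; exact Nat.cast_sum _ _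
      rw [hwl, h1, h2, Finset.sum_sub_distrib]
      rw [add_mul, sub_mul, sub_mul, Finset.sum_mul, Finset.sum_mul, hone]
      abel
    rw [hfact]
    exact S.mul_mem (S.add_mem (natCast_mem S _) (sum_mem fun i _ => hm i)) hukS
  -- second affine application: n+1 weights
  set b : Fin n → Fin n → R := fun j => fun i => if i = j then 1 else 0 with hb
  have E2 : φ (fun i => u ^ k * x i)
      = (∑ j, (x j * u ^ k) * φ (b j)) + wl * φ 0 := by
    have h := haff (n + 1) (Fin.snoc (fun j => x j * u ^ k) wl)
      (Fin.snoc b 0)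
      (fun j => by
        refine Fin.lastCases ?_ ?_ j
        · simpa using hwlS
        · intro j; simpa using S.mul_mem (hx j) hukS)
      (by
        rw [Fin.sum_univ_castSucc]
        simp only [Fin.snoc_castSucc, Fin.snoc_last]
        rw [hwl]; abel)
      (fun j i => by
        refine Fin.lastCases ?_ ?_ j
        · simp only [Fin.snoc_last, Pi.zero_apply]
          exact S.zero_mem
        · intro j
          simp only [Fin.snoc_castSucc, hb]
          split
          · exact S.one_mem
          · exact S.zero_mem)
    simp only [Fin.sum_univ_castSucc, Fin.snoc_castSucc, Fin.snoc_last,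
      Pi.zero_apply, mul_zero, add_zero] at h
    have harg : ∀ i, (∑ j : Fin n, x j * u ^ k * b j i) = u ^ k * x i := by
      intro i
      calc ∑ j : Fin n, x j * u ^ k * b j i
          = ∑ j : Fin n, if i = j then x j * u ^ k else 0 := by
            refine Finset.sum_congr rfl fun j _ => ?_
            rw [hb]
            by_cases hij : i = j <;> simp [hij]
        _ = x i * u ^ k := by rw [Finset.sum_ite_eq]; simp
        _ = u ^ k * x i := ((hcu (x i)).pow_left k).eq.symm
    calc φ (fun i => u ^ k * x i) = φ (fun i => ∑ j : Fin n, x j * u ^ k * b j i) := by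
          congr 1; funext i; rw [harg]
      _ = (∑ j, (x j * u ^ k) * φ (b j)) + wl * φ 0 := h
  -- combine the two equations
  have E3 : u ^ k * φ x + (1 - u ^ k) * φ 0
      = (∑ j, (x j * u ^ k) * φ (b j)) + wl * φ 0 := by
    rw [← E1, E2]
  -- multiply by c^k on the left
  have hkill : ∀ j : Fin n, c ^ k * (x j * u ^ k) = x j := fun j => by
    rw [← mul_assoc, ((hcc (x j)).pow_left k).eq, mul_assoc, hone, mul_one]
  have massoc : ∀ p q : R, c ^ k * (p * q) = (c ^ k * p) * q :=
    fun p q => (mul_assoc _ _ _).symm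
  have l1 : c ^ k * (1 - u ^ k) = c ^ k - 1 := by
    rw [mul_sub, mul_one, hone]
  have l2 : c ^ k * ∑ j, (x j * u ^ k) * φ (b j) = ∑ j, x j * φ (b j) := by
    rw [Finset.mul_sum]
    exact Finset.sum_congr rfl fun j _ => by
      rw [massoc, hkill]
  have l3 : c ^ k * wl = c ^ k - ∑ j, x j := by
    rw [hwl, mul_sub, mul_one, Finset.mul_sum]
    congr 1
    exact Finset.sum_congr rfl fun j _ => hkill j
  have E5 : φ x + (c ^ k - 1) * φ 0
      = (∑ j, x j * φ (b j)) + (c ^ k - ∑ j, x j) * φ 0 := by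
    have E4 := congrArg (fun z => c ^ k * z) E3
    simp only [mul_add] at E4
    rw [massoc, massoc, massoc, hone, one_mul, l1, l2, l3] at E4
    exact E4
  -- finish by algebra
  have hfin : φ x = (∑ j, x j * φ (b j)) + (c ^ k - ∑ j, x j) * φ 0
      - (c ^ k - 1) * φ 0 := by
    rw [← E5]; abel
  rw [hfin, hb]
  rw [sub_mul, sub_mul, Finset.sum_mul, one_mul]
  have hsplit : ∑ i, x i * (φ (fun j => if j = i then 1 else 0) - φ 0)
      = (∑ i, x i * φ (fun j => if j = i then 1 else 0)) - ∑ i, x i * φ 0 := by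
    rw [← Finset.sum_sub_distrib]
    exact Finset.sum_congr rfl fun i _ => by rw [mul_sub]
  rw [hsplit]
  abel
end
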